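/- Let M>1 and let φ be twice continuously differentiable on (0,∞); denote by |φ''|_∞ the maximum of |φ''| on [1/M, M]. Consider a finite set C of cells, each K∈C with measure |K|>0 and a finite face set E(K) with areas |σ|>0, and time levels n=0,…,N with constant time step δt>0. Suppose for all K, σ∈E(K) and n: e_K^{n} ∈ [1/M, M], e_σ^{n} ∈ (0, M], ρ_σ^{n} ∈ (0, M], and |u_{K,σ}^{n}| ≤ M; set F_{K,σ}^{n} = |σ|·ρ_σ^{n}·u_{K,σ}^{n}. Define, for each K and 0≤n≤N−1, |K|·R_K^{n+1} = (φ'(e_K^{n+1}) − φ'(e_K^{n}))·Σ_{σ∈E(K)} F_{K,σ}^{n}·(e_σ^{n} − e_K^{n}). Then Σ_{n=0}^{N−1} δt Σ_{K∈C} |K|·|R_K^{n+1}| ≤ 2·M³·|φ''|_∞·(Σ_{n=0}^{N−1} Σ_{K∈C} |K|·|e_K^{n+1}−e_K^{n}|)·(δt / h̲), where h̲ = min_{K∈C} |K| / (Σ_{σ∈E(K)} |σ|). -/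

import Mathlib

/-- L¹ bound (Lemma 3.8) on the remainder of the explicit time discretization of the
renormalized internal energy balance:
`‖R‖_{L¹} ≤ 2 M³ |φ''|_∞ |e|_{T,BV} (δt / h̲)`, where
`h̲ = min_K |K| / Σ_{σ∈E(K)} |σ|` and `F_{K,σ} = |σ| ρ_σ u_{K,σ}`. -/
theorem explicit_energy_time_remainder_bound
    (M : ℝ) (hM : 1 < M)
    (φ : ℝ → ℝ) (hφ : ContDiffOn ℝ 2 φ (Set.Ioi 0))
    (C2 : ℝ) (hC2 : ∀ x ∈ Set.Icc (1 / M) M, |deriv (deriv φ) x| ≤ C2)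
    (Cell Face : Type*) [Fintype Cell] [Fintype Face] [Nonempty Cell]
    (measK : Cell → ℝ) (hmeas : ∀ Kc, 0 < measK Kc)
    (E : Cell → Finset Face) (hE : ∀ Kc, (E Kc).Nonempty)
    (area : Face → ℝ) (harea : ∀ f, 0 < area f)
    (N : ℕ) (δt : ℝ) (hδt : 0 < δt)
    (e : Cell → ℕ → ℝ) (he : ∀ Kc n, n ≤ N → e Kc n ∈ Set.Icc (1 / M) M)
    (eface : Face → ℕ → ℝ) (heface : ∀ f n, n ≤ N → eface f n ∈ Set.Ioc 0 M)
    (ρface : Face → ℕ → ℝ) (hρface : ∀ f n, n ≤ N → ρface f n ∈ Set.Ioc 0 M)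
    (uK : Cell → Face → ℕ → ℝ) (hu : ∀ Kc f n, n ≤ N → |uK Kc f n| ≤ M) :
    ∑ n ∈ Finset.range N, δt * ∑ Kc : Cell,
        |(deriv φ (e Kc (n + 1)) - deriv φ (e Kc n)) *
          ∑ f ∈ E Kc, (area f * ρface f n * uK Kc f n) * (eface f n - e Kc n)|
      ≤ 2 * M ^ 3 * C2 * (∑ n ∈ Finset.range N, ∑ Kc : Cell, measK Kc * |e Kc (n + 1) - e Kc n|)
          * (δt / Finset.univ.inf' Finset.univ_nonempty
              (fun Kc => measK Kc / ∑ f ∈ E Kc, area f)) := by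
  classical
  set h := Finset.univ.inf' Finset.univ_nonempty
              (fun Kc => measK Kc / ∑ f ∈ E Kc, area f) with hh
  have hM0 : (0:ℝ) < M := lt_trans one_pos hM
  have hareaSum : ∀ Kc, 0 < ∑ f ∈ E Kc, area f := fun Kc =>
    Finset.sum_pos (fun f _ => harea f) (hE Kc)
  have hpos : 0 < h := by
    rw [hh, Finset.lt_inf'_iff]
    exact fun Kc _ => div_pos (hmeas Kc) (hareaSum Kc)
  have hle : ∀ Kc : Cell, h * (∑ f ∈ E Kc, area f) ≤ measK Kc := by
    intro Kc
    have : h ≤ measK Kc / ∑ f ∈ E Kc, area f :=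
      Finset.inf'_le _ (Finset.mem_univ Kc)
    calc h * (∑ f ∈ E Kc, area f) ≤ (measK Kc / ∑ f ∈ E Kc, area f) * (∑ f ∈ E Kc, area f) := by
          exact mul_le_mul_of_nonneg_right this (le_of_lt (hareaSum Kc))
      _ = measK Kc := div_mul_cancel₀ _ (ne_of_gt (hareaSum Kc))
  have hsub : Set.Icc (1 / M) M ⊆ Set.Ioi 0 := fun x hx =>
    lt_of_lt_of_le (div_pos one_pos hM0) hx.1
  have hd1 : ContDiffOn ℝ 1 (deriv φ) (Set.Ioi 0) := by
    have := hφ.deriv_of_isOpen isOpen_Ioi (m := 1) (by norm_num)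
    exact this
  have hderiv : ∀ x ∈ Set.Icc (1/M) M,
      HasDerivWithinAt (deriv φ) (deriv (deriv φ) x) (Set.Icc (1/M) M) x := by
    intro x hx
    have hdx : DifferentiableAt ℝ (deriv φ) x :=
      (hd1.differentiableOn one_ne_zero).differentiableAt (isOpen_Ioi.mem_nhds (hsub hx))
    exact hdx.hasDerivAt.hasDerivWithinAt
  have hC2nn : 0 ≤ C2 := le_trans (abs_nonneg _) (hC2 M ⟨le_of_lt (by
    rw [div_lt_iff₀ hM0]; nlinarith), le_refl M⟩)
  have lip : ∀ x ∈ Set.Icc (1/M) M, ∀ y ∈ Set.Icc (1/M) M,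
      |deriv φ y - deriv φ x| ≤ C2 * |y - x| := by
    intro x hx y hy
    have := (convex_Icc (1/M) M).norm_image_sub_le_of_norm_hasDerivWithin_le
      hderiv (fun z hz => by rw [Real.norm_eq_abs]; exact hC2 z hz) hx hy
    simpa [Real.norm_eq_abs] using this
  -- key pointwise bound
  have key : ∀ n ∈ Finset.range N, ∀ Kc : Cell,
      δt * |(deriv φ (e Kc (n + 1)) - deriv φ (e Kc n)) *
          ∑ f ∈ E Kc, (area f * ρface f n * uK Kc f n) * (eface f n - e Kc n)|
      ≤ 2 * M ^ 3 * C2 * (measK Kc * |e Kc (n + 1) - e Kc n|) * (δt / h) := by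
    intro n hn Kc
    have hnN : n ≤ N := le_of_lt (Finset.mem_range.mp hn)
    have hn1N : n + 1 ≤ N := Finset.mem_range.mp hn
    have h1 : |deriv φ (e Kc (n+1)) - deriv φ (e Kc n)| ≤ C2 * |e Kc (n+1) - e Kc n| :=
      lip _ (he Kc n hnN) _ (he Kc (n+1) hn1N)
    have h2 : |∑ f ∈ E Kc, (area f * ρface f n * uK Kc f n) * (eface f n - e Kc n)|
        ≤ (2 * M ^ 3) * ∑ f ∈ E Kc, area f := by
      calc |∑ f ∈ E Kc, (area f * ρface f n * uK Kc f n) * (eface f n - e Kc n)|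
          ≤ ∑ f ∈ E Kc, |(area f * ρface f n * uK Kc f n) * (eface f n - e Kc n)| :=
            Finset.abs_sum_le_sum_abs _ _
        _ ≤ ∑ f ∈ E Kc, (2 * M ^ 3) * area f := by
            apply Finset.sum_le_sum
            intro f hf
            have hρ := hρface f n hnN
            have hef := heface f n hnN
            have heK := he Kc n hnN
            have hu' := hu Kc f n hnN
            have ha := harea f
            have hsub' : |eface f n - e Kc n| ≤ 2 * M := by
              rw [abs_sub_le_iff]
              constructor <;> nlinarith [heK.1, heK.2, hef.1, hef.2,
                div_pos one_pos hM0]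
            have : |(area f * ρface f n * uK Kc f n) * (eface f n - e Kc n)|
                = area f * |ρface f n| * |uK Kc f n| * |eface f n - e Kc n| := by
              rw [abs_mul, abs_mul, abs_mul, abs_of_pos ha]
            rw [this, abs_of_pos hρ.1]
            have h3 : area f * ρface f n * |uK Kc f n| * |eface f n - e Kc n|
                ≤ area f * M * M * (2 * M) := by
              have h0u : (0:ℝ) ≤ |uK Kc f n| := abs_nonneg _
              have h0e : (0:ℝ) ≤ |eface f n - e Kc n| := abs_nonneg _
              gcongr
              exact hρ.2
            nlinarith
        _ = (2 * M ^ 3) * ∑ f ∈ E Kc, area f := by rw [Finset.mul_sum]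
    have hfacearea : (∑ f ∈ E Kc, area f) ≤ measK Kc / h := by
      rw [le_div_iff₀ hpos]
      linarith [hle Kc, mul_comm h (∑ f ∈ E Kc, area f)]
    rw [abs_mul]
    have hnn1 : 0 ≤ |deriv φ (e Kc (n+1)) - deriv φ (e Kc n)| := abs_nonneg _
    have hM3 : (0:ℝ) ≤ 2 * M ^ 3 := by positivity
    have hstep : |deriv φ (e Kc (n + 1)) - deriv φ (e Kc n)| *
        |∑ f ∈ E Kc, (area f * ρface f n * uK Kc f n) * (eface f n - e Kc n)|
        ≤ (C2 * |e Kc (n+1) - e Kc n|) * ((2 * M ^ 3) * (measK Kc / h)) := by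
      apply mul_le_mul h1 (le_trans h2 ?_) (abs_nonneg _) (by positivity)
      exact mul_le_mul_of_nonneg_left hfacearea hM3
    calc δt * (|deriv φ (e Kc (n + 1)) - deriv φ (e Kc n)| *
          |∑ f ∈ E Kc, (area f * ρface f n * uK Kc f n) * (eface f n - e Kc n)|)
        ≤ δt * ((C2 * |e Kc (n+1) - e Kc n|) * ((2 * M ^ 3) * (measK Kc / h))) :=
          mul_le_mul_of_nonneg_left hstep (le_of_lt hδt)
      _ = 2 * M ^ 3 * C2 * (measK Kc * |e Kc (n + 1) - e Kc n|) * (δt / h) := by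
          field_simp
  calc ∑ n ∈ Finset.range N, δt * ∑ Kc : Cell,
        |(deriv φ (e Kc (n + 1)) - deriv φ (e Kc n)) *
          ∑ f ∈ E Kc, (area f * ρface f n * uK Kc f n) * (eface f n - e Kc n)|
      = ∑ n ∈ Finset.range N, ∑ Kc : Cell, δt *
        |(deriv φ (e Kc (n + 1)) - deriv φ (e Kc n)) *
          ∑ f ∈ E Kc, (area f * ρface f n * uK Kc f n) * (eface f n - e Kc n)| := by
        simp [Finset.mul_sum]
    _ ≤ ∑ n ∈ Finset.range N, ∑ Kc : Cell,
          2 * M ^ 3 * C2 * (measK Kc * |e Kc (n + 1) - e Kc n|) * (δt / h) := by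
        apply Finset.sum_le_sum
        intro n hn
        exact Finset.sum_le_sum (fun Kc _ => key n hn Kc)
    _ = 2 * M ^ 3 * C2 * (∑ n ∈ Finset.range N, ∑ Kc : Cell,
          measK Kc * |e Kc (n + 1) - e Kc n|) * (δt / h) := by
        simp only [Finset.mul_sum, Finset.sum_mul]
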